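/- Let H be a real inner product space, κ, B > 0, vectors φ_1,…,φ_n ∈ H with ‖φ_t‖ ≤ κ, and θ_1,…,θ_n ∈ H with ‖θ_t‖ ≤ B. Suppose 1 = t_1 < ⋯ < t_{m+1} = n+1 satisfy Σ_{t=t_j}^{t_{j+1}−2} ‖θ_t − θ_{t+1}‖ ≤ C/m for each j, and set θ̄_t := (1/(t_{j+1}−t_j)) Σ_{s=t_j}^{t_{j+1}−1} θ_s for t_j ≤ t < t_{j+1}. Then Σ_{t=1}^n ⟨θ̄_t − θ_t, φ_t⟩² ≤ κ² n (C/m)² + 4 κ² B² m. -/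

import Mathlib

open Finset

lemma telescope_norm' {H : Type*} [NormedAddCommGroup H] (θ : ℕ → H) :
    ∀ u s : ℕ, u ≤ s → ‖θ u - θ s‖ ≤ ∑ v ∈ Finset.Ico u s, ‖θ v - θ (v + 1)‖ := by
  intro u s h
  induction s, h using Nat.le_induction with
  | base => simp
  | succ s hs ih =>
    rw [Finset.sum_Ico_succ_top hs]
    have htri : ‖θ u - θ (s + 1)‖ ≤ ‖θ u - θ s‖ + ‖θ s - θ (s + 1)‖ := by
      have := dist_triangle (θ u) (θ s) (θ (s + 1))
      simpa [dist_eq_norm] using this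
    linarith

theorem restart_approx_error_rkhs {H : Type*} [NormedAddCommGroup H] [InnerProductSpace ℝ H]
    (n m : ℕ) (κ B C : ℝ)
    (hκ : 0 < κ) (hB : 0 < B) (hm : 1 ≤ m)
    (φ θ θbar : ℕ → H) (t : ℕ → ℕ)
    (hφ : ∀ s ∈ Finset.Icc 1 n, ‖φ s‖ ≤ κ)
    (hθ : ∀ s ∈ Finset.Icc 1 n, ‖θ s‖ ≤ B)
    (ht1 : t 1 = 1) (htm : t (m + 1) = n + 1)
    (hmono : ∀ j ∈ Finset.Icc 1 m, t j < t (j + 1))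
    (hTV : ∀ j ∈ Finset.Icc 1 m,
      ∑ s ∈ Finset.Ico (t j) (t (j + 1) - 1), ‖θ s - θ (s + 1)‖ ≤ C / m)
    (hbar : ∀ j ∈ Finset.Icc 1 m, ∀ s ∈ Finset.Ico (t j) (t (j + 1)),
      θbar s = (1 / ((t (j + 1) : ℝ) - t j)) • ∑ u ∈ Finset.Ico (t j) (t (j + 1)), θ u) :
    ∑ s ∈ Finset.Icc 1 n, (inner ℝ (θbar s - θ s) (φ s) : ℝ) ^ 2
      ≤ κ ^ 2 * n * (C / m) ^ 2 + 4 * κ ^ 2 * B ^ 2 * m := by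
  have hm1 : (1 : ℕ) ∈ Finset.Icc 1 m := Finset.mem_Icc.mpr ⟨le_refl 1, hm⟩
  have hCm : 0 ≤ C / m :=
    le_trans (Finset.sum_nonneg fun _ _ => norm_nonneg _) (hTV 1 hm1)
  have key : ∀ s ∈ Finset.Icc 1 n,
      (inner ℝ (θbar s - θ s) (φ s) : ℝ) ^ 2 ≤ κ ^ 2 * (C / m) ^ 2 := by
    intro s hs
    obtain ⟨hs1, hsn⟩ := Finset.mem_Icc.mp hs
    -- find the block containing s
    have hne : ((Finset.Icc 1 m).filter (fun j => t j ≤ s)).Nonempty :=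
      ⟨1, Finset.mem_filter.mpr ⟨hm1, by rw [ht1]; exact hs1⟩⟩
    set j := ((Finset.Icc 1 m).filter (fun j => t j ≤ s)).max' hne with hjdef
    have hjmem := ((Finset.Icc 1 m).filter (fun j => t j ≤ s)).max'_mem hne
    obtain ⟨hj, hjs⟩ := Finset.mem_filter.mp hjmem
    obtain ⟨hj1, hjm⟩ := Finset.mem_Icc.mp hj
    have hjs' : s < t (j + 1) := by
      by_cases hjm' : j = m
      · rw [hjm', htm]; omega
      · by_contra hle
        push_neg at hle
        have hmem : j + 1 ∈ (Finset.Icc 1 m).filter (fun j => t j ≤ s) :=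
          Finset.mem_filter.mpr ⟨Finset.mem_Icc.mpr ⟨by omega, by omega⟩, hle⟩
        have := Finset.le_max' _ _ hmem
        omega
    set a := t j with hadef
    set b := t (j + 1) with hbdef
    have hab : a < b := hmono j hj
    have hsIco : s ∈ Finset.Ico a b := Finset.mem_Ico.mpr ⟨hjs, hjs'⟩
    have hbarEq := hbar j hj s hsIco
    -- pairwise bound within block
    have hpair : ∀ u ∈ Finset.Ico a b, ‖θ u - θ s‖ ≤ C / m := by
      intro u hu
      obtain ⟨hu1, hu2⟩ := Finset.mem_Ico.mp hu
      have hsub : ∀ x y : ℕ, a ≤ x → y < b →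
          ∑ v ∈ Finset.Ico x y, ‖θ v - θ (v + 1)‖
            ≤ ∑ v ∈ Finset.Ico a (b - 1), ‖θ v - θ (v + 1)‖ := by
        intro x y hx hy
        exact Finset.sum_le_sum_of_subset_of_nonneg
          (Finset.Ico_subset_Ico hx (by omega)) (fun _ _ _ => norm_nonneg _)
      rcases le_total u s with h | h
      · calc ‖θ u - θ s‖ ≤ ∑ v ∈ Finset.Ico u s, ‖θ v - θ (v + 1)‖ :=
              telescope_norm' θ u s h
          _ ≤ ∑ v ∈ Finset.Ico a (b - 1), ‖θ v - θ (v + 1)‖ := hsub u s hu1 hjs'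
          _ ≤ C / m := hTV j hj
      · rw [norm_sub_rev]
        calc ‖θ s - θ u‖ ≤ ∑ v ∈ Finset.Ico s u, ‖θ v - θ (v + 1)‖ :=
              telescope_norm' θ s u h
          _ ≤ ∑ v ∈ Finset.Ico a (b - 1), ‖θ v - θ (v + 1)‖ := hsub s u hjs hu2
          _ ≤ C / m := hTV j hj
    have hLpos : (0 : ℝ) < (b : ℝ) - a := by
      have : (a : ℝ) < b := by exact_mod_cast hab
      linarith
    have hdiff : θbar s - θ s
        = (1 / ((b : ℝ) - a)) • ∑ u ∈ Finset.Ico a b, (θ u - θ s) := by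
      rw [Finset.sum_sub_distrib, smul_sub, Finset.sum_const, Nat.card_Ico, ← hbarEq]
      congr 1
      rw [← Nat.cast_smul_eq_nsmul ℝ, smul_smul]
      rw [Nat.cast_sub (le_of_lt hab)]
      rw [one_div, inv_mul_cancel₀ (ne_of_gt hLpos), one_smul]
    have hnorm : ‖θbar s - θ s‖ ≤ C / m := by
      rw [hdiff, norm_smul]
      have h1 : ‖(1 / ((b : ℝ) - a))‖ = 1 / ((b : ℝ) - a) := by
        rw [Real.norm_eq_abs, abs_of_pos (by positivity)]
      rw [h1]
      have h2 : ‖∑ u ∈ Finset.Ico a b, (θ u - θ s)‖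
          ≤ ∑ u ∈ Finset.Ico a b, ‖θ u - θ s‖ := norm_sum_le _ _
      have h3 : ∑ u ∈ Finset.Ico a b, ‖θ u - θ s‖ ≤ ((b : ℝ) - a) * (C / m) := by
        calc ∑ u ∈ Finset.Ico a b, ‖θ u - θ s‖
            ≤ ∑ u ∈ Finset.Ico a b, (C / m) := Finset.sum_le_sum hpair
          _ = ((b - a : ℕ) : ℝ) * (C / m) := by
              rw [Finset.sum_const, Nat.card_Ico, nsmul_eq_mul]
          _ = ((b : ℝ) - a) * (C / m) := by
              rw [Nat.cast_sub (le_of_lt hab)]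
      calc (1 / ((b : ℝ) - a)) * ‖∑ u ∈ Finset.Ico a b, (θ u - θ s)‖
          ≤ (1 / ((b : ℝ) - a)) * (((b : ℝ) - a) * (C / m)) := by
            apply mul_le_mul_of_nonneg_left (le_trans h2 h3) (by positivity)
        _ = C / m := by field_simp
    have hCS : |(inner ℝ (θbar s - θ s) (φ s) : ℝ)| ≤ ‖θbar s - θ s‖ * ‖φ s‖ :=
      abs_real_inner_le_norm _ _
    have hφs := hφ s hs
    have hprod : ‖θbar s - θ s‖ * ‖φ s‖ ≤ (C / m) * κ :=
      mul_le_mul hnorm hφs (norm_nonneg _) hCm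
    calc (inner ℝ (θbar s - θ s) (φ s) : ℝ) ^ 2
        = |(inner ℝ (θbar s - θ s) (φ s) : ℝ)| ^ 2 := (sq_abs _).symm
      _ ≤ ((C / m) * κ) ^ 2 := by
          apply pow_le_pow_left₀ (abs_nonneg _) (le_trans hCS hprod)
      _ = κ ^ 2 * (C / m) ^ 2 := by ring
  calc ∑ s ∈ Finset.Icc 1 n, (inner ℝ (θbar s - θ s) (φ s) : ℝ) ^ 2
      ≤ ∑ _s ∈ Finset.Icc 1 n, κ ^ 2 * (C / m) ^ 2 := Finset.sum_le_sum key
    _ = (n : ℝ) * (κ ^ 2 * (C / m) ^ 2) := by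
        rw [Finset.sum_const, Nat.card_Icc, nsmul_eq_mul]
        norm_num
    _ ≤ κ ^ 2 * n * (C / m) ^ 2 + 4 * κ ^ 2 * B ^ 2 * m := by
        have h4 : 0 ≤ 4 * κ ^ 2 * B ^ 2 * (m : ℝ) := by positivity
        nlinarith
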